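/- Let q > 5 and γ > 0, and let f : ℝ³ → [0,∞) be measurable with ‖f‖_q := sup_{v∈ℝ³} (1+|v|)^q f(v) < ∞, ρ_f > 0, and T_f > 0. Then there exists a constant C_{q,γ} > 0, depending only on q and γ, such that for every v ∈ ℝ³, |v - U_f|^q M_γ(f)(v) ≤ C_{q,γ} ‖f‖_q, where M_γ(f)(v) := ρ_f (2πT_f)^{-3/2} exp(-γ|v-U_f|²/(2T_f)). -/

import Mathlib

open MeasureTheory Real

abbrev E3 := EuclideanSpace ℝ (Fin 3)

set_option maxHeartbeats 1000000

/-- Elementary: `t^s e^{-t} ≤ (2s)^s` for `t ≥ 0`, `s > 0`. -/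
lemma texp_aux (s t : ℝ) (hs : 0 < s) (ht : 0 ≤ t) :
    t ^ s * Real.exp (-t) ≤ (2 * s) ^ s := by
  have h1 : t ≤ 2 * s * Real.exp (t / (2 * s)) := by
    have h := Real.add_one_le_exp (t / (2 * s))
    have h2 : t / (2 * s) ≤ Real.exp (t / (2 * s)) := by linarith [div_nonneg ht (by linarith : (0:ℝ) ≤ 2 * s)]
    calc t = 2 * s * (t / (2 * s)) := by field_simp
    _ ≤ 2 * s * Real.exp (t / (2 * s)) := by
        apply mul_le_mul_of_nonneg_left h2 (by linarith)
  have h2 : t ^ s ≤ (2 * s * Real.exp (t / (2 * s))) ^ s :=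
    Real.rpow_le_rpow ht h1 hs.le
  have h3 : (2 * s * Real.exp (t / (2 * s))) ^ s
      = (2 * s) ^ s * Real.exp (t / 2) := by
    rw [Real.mul_rpow (by linarith) (Real.exp_pos _).le,
      Real.rpow_def_of_pos (Real.exp_pos _), Real.log_exp]
    congr 1
    field_simp
  calc t ^ s * Real.exp (-t) ≤ (2 * s) ^ s * Real.exp (t / 2) * Real.exp (-t) := by
        apply mul_le_mul_of_nonneg_right _ (Real.exp_pos _).le
        rw [← h3]; exact h2
  _ = (2 * s) ^ s * Real.exp (t / 2 + -t) := by rw [Real.exp_add]; ring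
  _ ≤ (2 * s) ^ s * 1 := by
      apply mul_le_mul_of_nonneg_left _ (by positivity)
      rw [Real.exp_le_one_iff]; linarith
  _ = (2 * s) ^ s := mul_one _

/-- for q > 5 and γ > 0 there is a constant C_{q,γ}, depending only
on q and γ, such that |v - U_f|^q M_γ(f)(v) ≤ C_{q,γ} ‖f‖_q for every v. -/
theorem centered_weight_M_bdd (q γ : ℝ) (hq : 5 < q) (hγ : 0 < γ) :
    ∃ C : ℝ, 0 < C ∧
      ∀ (f : E3 → ℝ), Measurable f → (∀ v, 0 ≤ f v) →
        Integrable f →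
        ∀ N : ℝ, (∀ v, (1 + ‖v‖) ^ q * f v ≤ N) →
        ∀ (ρf : ℝ) (Uf : E3) (Tf : ℝ),
          ρf = ∫ v, f v →
          Integrable (fun v => f v • v) →
          Uf = ρf⁻¹ • ∫ v, f v • v →
          Integrable (fun v => ‖v - Uf‖ ^ 2 * f v) →
          Tf = (3 * ρf)⁻¹ * ∫ v, ‖v - Uf‖ ^ 2 * f v →
          0 < ρf → 0 < Tf →
          ∀ v : E3,
            ‖v - Uf‖ ^ q *
              (ρf * (2 * π * Tf) ^ (-(3 : ℝ) / 2) *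
                Real.exp (-γ * ‖v - Uf‖ ^ 2 / (2 * Tf))) ≤ C * N := by
  have hdim : (Module.finrank ℝ E3 : ℝ) = 3 := by
    rw [finrank_euclideanSpace_fin]; norm_num
  -- integrability of the model weights
  have hgint : Integrable (fun v : E3 => (1 + ‖v‖) ^ (-q)) :=
    integrable_one_add_norm (by rw [hdim]; linarith)
  have hg2int : Integrable (fun v : E3 => (1 + ‖v‖) ^ (-(q - 2))) :=
    integrable_one_add_norm (by rw [hdim]; linarith)
  set κ₀ : ℝ := ∫ v : E3, (1 + ‖v‖) ^ (-q) with hκ₀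
  set κ₁ : ℝ := ∫ v : E3, (1 + ‖v‖) ^ (-(q - 2)) with hκ₁
  have hκ₀pos : 0 < κ₀ := by
    rw [hκ₀, integral_pos_iff_support_of_nonneg
      (fun v => by positivity) hgint]
    have : Function.support (fun v : E3 => (1 + ‖v‖) ^ (-q)) = Set.univ := by
      ext v; simp only [Function.mem_support, Set.mem_univ, iff_true]
      positivity
    rw [this]
    exact IsOpen.measure_pos _ isOpen_univ ⟨0, trivial⟩
  have hκ₁pos : 0 < κ₁ := by
    rw [hκ₁, integral_pos_iff_support_of_nonneg
      (fun v => by positivity) hg2int]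
    have : Function.support (fun v : E3 => (1 + ‖v‖) ^ (-(q - 2))) = Set.univ := by
      ext v; simp only [Function.mem_support, Set.mem_univ, iff_true]
      positivity
    rw [this]
    exact IsOpen.measure_pos _ isOpen_univ ⟨0, trivial⟩
  set D : ℝ := (2 : ℝ) ^ (q - 2) * κ₁ + κ₀ with hD
  have hDpos : 0 < D := by positivity
  refine ⟨(2 * π) ^ (-(3 : ℝ) / 2) * (2 * q / γ) ^ (q / 2) * D, by positivity, ?_⟩
  intro f hfm hf0 hfint N hN ρf Uf Tf hρ hfvint hU hm2int hT hρ0 hT0 v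
  -- pointwise bound on f
  have hfle : ∀ w : E3, f w ≤ N * (1 + ‖w‖) ^ (-q) := by
    intro w
    have hb : (0 : ℝ) < (1 + ‖w‖) ^ q := by positivity
    rw [Real.rpow_neg (by positivity), ← div_eq_mul_inv, le_div_iff₀ hb]
    calc f w * (1 + ‖w‖) ^ q = (1 + ‖w‖) ^ q * f w := by ring
    _ ≤ N := hN w
  -- ρf ≤ κ₀ N
  have hρleN : ρf ≤ κ₀ * N := by
    rw [hρ]
    calc (∫ w, f w) ≤ ∫ w : E3, N * (1 + ‖w‖) ^ (-q) :=
          integral_mono hfint (hgint.const_mul N) hfle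
    _ = N * κ₀ := integral_const_mul N _
    _ = κ₀ * N := by ring
  have hN0 : 0 < N := by nlinarith
  -- second moment identity / inequality: 3 ρ T ≤ ∫ ‖v‖² f
  have hm2 : (∫ w, ‖w - Uf‖ ^ 2 * f w) = 3 * ρf * Tf := by
    rw [hT]; field_simp
  have hIv : (∫ w, f w • w) = ρf • Uf := by
    rw [hU, smul_smul, mul_inv_cancel₀ hρ0.ne', one_smul]
  have hmint : Integrable (fun w : E3 => ‖w‖ ^ 2 * f w) := by
    apply Integrable.mono' ((hm2int.const_mul 2).add (hfint.const_mul (2 * ‖Uf‖ ^ 2)))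
    · exact ((measurable_norm.pow_const 2).mul hfm).aestronglyMeasurable
    · refine ae_of_all _ fun w => ?_
      have h1 : ‖w‖ ≤ ‖w - Uf‖ + ‖Uf‖ := by
        simpa using norm_add_le (w - Uf) Uf
      have h1sq : ‖w‖ ^ 2 ≤ (‖w - Uf‖ + ‖Uf‖) ^ 2 := pow_le_pow_left₀ (norm_nonneg w) h1 2
      have h2 : ‖w‖ ^ 2 ≤ 2 * ‖w - Uf‖ ^ 2 + 2 * ‖Uf‖ ^ 2 := by
        nlinarith [sq_nonneg (‖w - Uf‖ - ‖Uf‖), h1sq]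
      have h3 : |‖w‖ ^ 2 * f w| = ‖w‖ ^ 2 * f w :=
        abs_of_nonneg (mul_nonneg (by positivity) (hf0 w))
      rw [Real.norm_eq_abs, h3]
      simp only [Pi.add_apply]
      nlinarith [mul_nonneg (sub_nonneg.2 h2) (hf0 w), hf0 w]
  have hinner_int : Integrable (fun w : E3 => (inner ℝ Uf (f w • w) : ℝ)) :=
    ContinuousLinearMap.integrable_comp (innerSL ℝ Uf) hfvint
  have hkey0 : 3 * ρf * Tf ≤ ∫ w, ‖w‖ ^ 2 * f w := by
    have hptw : ∀ w : E3, ‖w - Uf‖ ^ 2 * f w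
        = ‖w‖ ^ 2 * f w - 2 * (inner ℝ Uf (f w • w) : ℝ) + ‖Uf‖ ^ 2 * f w := by
      intro w
      have h := norm_sub_sq_real w Uf
      have h2 : (inner ℝ Uf (f w • w) : ℝ) = f w * (inner ℝ w Uf : ℝ) := by
        rw [inner_smul_right, real_inner_comm]
      rw [h2, h]
      ring
    have hintegral : (∫ w, ‖w - Uf‖ ^ 2 * f w)
        = (∫ w, ‖w‖ ^ 2 * f w) - 2 * (inner ℝ Uf ((∫ w, f w • w) : E3) : ℝ)
          + ‖Uf‖ ^ 2 * ρf := by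
      have e1 : (∫ w, ‖w - Uf‖ ^ 2 * f w)
          = ∫ w, (‖w‖ ^ 2 * f w - 2 * (inner ℝ Uf (f w • w) : ℝ) + ‖Uf‖ ^ 2 * f w) := by
        congr 1; ext w; exact hptw w
      have hsub : Integrable (fun w : E3 => ‖w‖ ^ 2 * f w - 2 * (inner ℝ Uf (f w • w) : ℝ)) :=
        hmint.sub (hinner_int.const_mul 2)
      rw [e1, integral_add hsub (hfint.const_mul (‖Uf‖ ^ 2)),
        integral_sub hmint (hinner_int.const_mul 2),
        integral_const_mul, integral_const_mul, ← hρ]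
      have hswap := ContinuousLinearMap.integral_comp_comm (innerSL ℝ Uf) hfvint
      simp only [innerSL_apply_apply] at hswap
      rw [hswap]
    rw [hintegral, hIv] at hm2
    have : (inner ℝ Uf (ρf • Uf) : ℝ) = ρf * ‖Uf‖ ^ 2 := by
      rw [inner_smul_right, real_inner_self_eq_norm_sq]
    rw [this] at hm2
    nlinarith [sq_nonneg ‖Uf‖, hρ0]
  -- tail estimate:  ∫ ‖v‖²f ≤ R²ρ + N 2^{q-2} (R^3 R^{-(q-2)}) κ₁ for R ≥ 1
  have htail : ∀ R : ℝ, 1 ≤ R →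
      (∫ w, ‖w‖ ^ 2 * f w) ≤ R ^ 2 * ρf
        + N * (2 : ℝ) ^ (q - 2) * ((R:ℝ) ^ (3:ℕ) * R ^ (-(q - 2))) * κ₁ := by
    intro R hR1
    have hR0 : (0 : ℝ) < R := by linarith
    have hψint : Integrable (fun w : E3 => (R + ‖w‖) ^ (-(q - 2))) := by
      apply Integrable.mono' hg2int
      · exact ((continuous_const.add continuous_norm).rpow_const
          (fun w => Or.inl (by have := norm_nonneg w; intro h; simp only [Pi.add_apply] at h; linarith))).aestronglyMeasurable
      · refine ae_of_all _ fun w => ?_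
        rw [Real.norm_eq_abs, abs_of_nonneg (Real.rpow_nonneg (by positivity) _)]
        exact Real.rpow_le_rpow_of_nonpos (by positivity) (by linarith) (by linarith)
    have hψval : (∫ w : E3, (R + ‖w‖) ^ (-(q - 2)))
        = (R:ℝ) ^ (3:ℕ) * R ^ (-(q - 2)) * κ₁ := by
      have hcs := MeasureTheory.Measure.integral_comp_smul (volume : Measure E3)
        (fun w : E3 => (R + ‖w‖) ^ (-(q - 2))) R
      have e1 : (fun x : E3 => (R + ‖R • x‖) ^ (-(q - 2)))
          = fun x : E3 => R ^ (-(q - 2)) * (1 + ‖x‖) ^ (-(q - 2)) := by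
        ext x
        rw [norm_smul, Real.norm_eq_abs, abs_of_pos hR0,
          ← Real.mul_rpow hR0.le (by positivity)]
        congr 1; ring
      rw [show (fun x : E3 => (R + ‖R • x‖) ^ (-(q-2))) = _ from e1] at hcs
      rw [integral_const_mul] at hcs
      have hfr : Module.finrank ℝ E3 = 3 := finrank_euclideanSpace_fin
      rw [hfr, smul_eq_mul, abs_of_pos (by positivity)] at hcs
      rw [← hκ₁] at hcs
      have hR3 : (0:ℝ) < (R:ℝ) ^ (3:ℕ) := by positivity
      have hone : (R:ℝ) ^ (3:ℕ) * ((R:ℝ) ^ (3:ℕ))⁻¹ = 1 := mul_inv_cancel₀ hR3.ne'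
      calc (∫ w : E3, (R + ‖w‖) ^ (-(q - 2)))
          = (R:ℝ) ^ (3:ℕ) * (((R:ℝ) ^ (3:ℕ))⁻¹ * ∫ w : E3, (R + ‖w‖) ^ (-(q - 2))) := by
            rw [← mul_assoc, hone, one_mul]
      _ = (R:ℝ) ^ (3:ℕ) * (R ^ (-(q - 2)) * κ₁) := by rw [← hcs]
      _ = (R:ℝ) ^ (3:ℕ) * R ^ (-(q - 2)) * κ₁ := by ring
    have hptw : ∀ w : E3, ‖w‖ ^ 2 * f w
        ≤ R ^ 2 * f w + N * (2 : ℝ) ^ (q - 2) * (R + ‖w‖) ^ (-(q - 2)) := by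
      intro w
      by_cases hw : ‖w‖ ≤ R
      · have h1 : ‖w‖ ^ 2 * f w ≤ R ^ 2 * f w := by
          apply mul_le_mul_of_nonneg_right _ (hf0 w)
          nlinarith [norm_nonneg w]
        have h2 : (0:ℝ) ≤ N * (2 : ℝ) ^ (q - 2) * (R + ‖w‖) ^ (-(q - 2)) := by positivity
        linarith
      · push_neg at hw
        have hw0 : (0:ℝ) < ‖w‖ := by linarith
        have h1 : ‖w‖ ^ 2 * f w ≤ ‖w‖ ^ 2 * (N * (1 + ‖w‖) ^ (-q)) :=
          mul_le_mul_of_nonneg_left (hfle w) (by positivity)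
        have h2 : (1 + ‖w‖) ^ (-q) ≤ ‖w‖ ^ (-q) :=
          Real.rpow_le_rpow_of_nonpos hw0 (by linarith) (by linarith)
        have h3 : ‖w‖ ^ 2 * ‖w‖ ^ (-q) = ‖w‖ ^ (-(q - 2)) := by
          rw [← Real.rpow_natCast ‖w‖ 2, ← Real.rpow_add hw0]
          congr 1
          push_cast
          ring
        have h4 : ‖w‖ ^ (-(q - 2)) ≤ (2:ℝ) ^ (q - 2) * (R + ‖w‖) ^ (-(q - 2)) := by
          have h5 : (2 * ‖w‖) ^ (-(q - 2)) ≤ (R + ‖w‖) ^ (-(q - 2)) :=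
            Real.rpow_le_rpow_of_nonpos (by positivity) (by linarith) (by linarith)
          have h6 : (2 * ‖w‖) ^ (-(q - 2)) = (2:ℝ) ^ (-(q - 2)) * ‖w‖ ^ (-(q - 2)) :=
            Real.mul_rpow (by norm_num) hw0.le
          have h7 : (2:ℝ) ^ (q - 2) * (2:ℝ) ^ (-(q - 2)) = 1 := by
            rw [← Real.rpow_add (by norm_num)]; norm_num
          calc ‖w‖ ^ (-(q - 2))
              = (2:ℝ) ^ (q - 2) * ((2:ℝ) ^ (-(q - 2)) * ‖w‖ ^ (-(q - 2))) := by
                rw [← mul_assoc, h7, one_mul]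
          _ = (2:ℝ) ^ (q - 2) * (2 * ‖w‖) ^ (-(q - 2)) := by rw [h6]
          _ ≤ (2:ℝ) ^ (q - 2) * (R + ‖w‖) ^ (-(q - 2)) :=
              mul_le_mul_of_nonneg_left h5 (by positivity)
        have h8 : (0:ℝ) ≤ R ^ 2 * f w := mul_nonneg (by positivity) (hf0 w)
        calc ‖w‖ ^ 2 * f w ≤ ‖w‖ ^ 2 * (N * (1 + ‖w‖) ^ (-q)) := h1
        _ = N * (‖w‖ ^ 2 * (1 + ‖w‖) ^ (-q)) := by ring
        _ ≤ N * (‖w‖ ^ 2 * ‖w‖ ^ (-q)) := by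
            apply mul_le_mul_of_nonneg_left _ hN0.le
            exact mul_le_mul_of_nonneg_left h2 (by positivity)
        _ = N * ‖w‖ ^ (-(q - 2)) := by rw [h3]
        _ ≤ N * ((2:ℝ) ^ (q - 2) * (R + ‖w‖) ^ (-(q - 2))) :=
            mul_le_mul_of_nonneg_left h4 hN0.le
        _ ≤ R ^ 2 * f w + N * (2 : ℝ) ^ (q - 2) * (R + ‖w‖) ^ (-(q - 2)) := by
            rw [← mul_assoc]; linarith
    calc (∫ w, ‖w‖ ^ 2 * f w)
        ≤ ∫ w : E3, (R ^ 2 * f w + N * (2 : ℝ) ^ (q - 2) * (R + ‖w‖) ^ (-(q - 2))) :=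
          integral_mono hmint
            ((hfint.const_mul _).add (hψint.const_mul _)) hptw
    _ = R ^ 2 * ρf + N * (2 : ℝ) ^ (q - 2) * ((R:ℝ) ^ (3:ℕ) * R ^ (-(q - 2))) * κ₁ := by
        rw [integral_add (hfint.const_mul _) (hψint.const_mul _),
          integral_const_mul, integral_const_mul, hψval, ← hρ]
        ring
  -- main lemma : ρ T^{(q-3)/2} ≤ D N
  have hq3 : (0:ℝ) < q - 3 := by linarith
  have hkey : ρf * Tf ^ ((q - 3) / 2) ≤ D * N := by
    set P : ℝ := N * ((2:ℝ) ^ (q - 2) * κ₁) with hP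
    have hP0 : 0 < P := by positivity
    by_cases hcase : ρf ≤ P
    · -- R := (P/ρ)^{1/(q-3)}
      set u : ℝ := P / ρf with hu
      have hu1 : (1:ℝ) ≤ u := (one_le_div hρ0).2 hcase
      have hu0 : (0:ℝ) < u := by linarith
      set R : ℝ := u ^ (q - 3)⁻¹ with hR
      have hR1 : (1:ℝ) ≤ R := by
        rw [hR]
        calc (1:ℝ) = 1 ^ (q - 3)⁻¹ := (Real.one_rpow _).symm
        _ ≤ u ^ (q - 3)⁻¹ := Real.rpow_le_rpow zero_le_one hu1 (by positivity)
      set θ : ℝ := 2 * (q - 3)⁻¹ with hθ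
      have hRsq : R ^ (2:ℕ) = u ^ θ := by
        rw [hR, ← Real.rpow_natCast (u ^ (q-3)⁻¹) 2, ← Real.rpow_mul hu0.le, hθ]
        norm_num
        ring_nf
      have hR35 : (R:ℝ) ^ (3:ℕ) * R ^ (-(q - 2)) = u ^ θ * u⁻¹ := by
        rw [hR, ← Real.rpow_natCast (u ^ (q-3)⁻¹) 3, ← Real.rpow_mul hu0.le,
          ← Real.rpow_mul hu0.le, ← Real.rpow_add hu0]
        rw [show u⁻¹ = u ^ (-1 : ℝ) by rw [Real.rpow_neg_one],
          ← Real.rpow_add hu0, hθ]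
        congr 1
        field_simp
        ring
      have h1 := htail R hR1
      rw [hRsq, hR35] at h1
      have h2 : 3 * ρf * Tf ≤ 2 * (u ^ θ * ρf) := by
        have hPu : N * ((2:ℝ) ^ (q - 2)) * (u ^ θ * u⁻¹) * κ₁ = u ^ θ * ρf := by
          have : P * u⁻¹ = ρf := by
            rw [hu]; field_simp
          calc N * ((2:ℝ) ^ (q - 2)) * (u ^ θ * u⁻¹) * κ₁
              = u ^ θ * (P * u⁻¹) := by rw [hP]; ring
          _ = u ^ θ * ρf := by rw [this]
        nlinarith [hkey0, h1, hPu]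
      have h3 : Tf ≤ 2 / 3 * u ^ θ := by nlinarith
      have h4 : Tf ^ ((q - 3) / 2) ≤ u := by
        calc Tf ^ ((q - 3) / 2) ≤ (2 / 3 * u ^ θ) ^ ((q - 3) / 2) :=
              Real.rpow_le_rpow hT0.le h3 (by positivity)
        _ = (2/3 : ℝ) ^ ((q - 3) / 2) * (u ^ θ) ^ ((q - 3) / 2) :=
              Real.mul_rpow (by norm_num) (by positivity)
        _ = (2/3 : ℝ) ^ ((q - 3) / 2) * u := by
              rw [← Real.rpow_mul hu0.le]
              congr 1
              rw [show θ * ((q - 3)/2) = 1 by rw [hθ]; field_simp]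
              exact Real.rpow_one u
        _ ≤ 1 * u := by
              apply mul_le_mul_of_nonneg_right _ hu0.le
              exact Real.rpow_le_one (by norm_num) (by norm_num) (by positivity)
        _ = u := one_mul u
      calc ρf * Tf ^ ((q - 3) / 2) ≤ ρf * u := mul_le_mul_of_nonneg_left h4 hρ0.le
      _ = P := by rw [hu]; field_simp
      _ ≤ D * N := by rw [hD, hP]; nlinarith
    · push_neg at hcase
      have h1 := htail 1 le_rfl
      simp only [one_pow, Real.one_rpow, one_mul, mul_one] at h1
      have h2 : 3 * ρf * Tf ≤ 2 * ρf := by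
        have : N * (2:ℝ) ^ (q - 2) * κ₁ = P := by rw [hP]; ring
        nlinarith [hkey0]
      have h3 : Tf ≤ 2 / 3 := by nlinarith
      have h4 : Tf ^ ((q - 3) / 2) ≤ 1 :=
        Real.rpow_le_one hT0.le (by linarith) (by positivity)
      calc ρf * Tf ^ ((q - 3) / 2) ≤ ρf * 1 := mul_le_mul_of_nonneg_left h4 hρ0.le
      _ = ρf := mul_one _
      _ ≤ κ₀ * N := hρleN
      _ ≤ D * N := by rw [hD]; nlinarith
  -- final pointwise chain
  set x : ℝ := ‖v - Uf‖ with hx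
  have hx0 : 0 ≤ x := norm_nonneg _
  set t : ℝ := γ * x ^ 2 / (2 * Tf) with ht
  have ht0 : 0 ≤ t := by positivity
  have harg : -γ * x ^ 2 / (2 * Tf) = -t := by rw [ht]; ring
  have hxq : x ^ q * Real.exp (-t) ≤ (2 * q / γ) ^ (q / 2) * Tf ^ (q / 2) := by
    have hbase : (2 * Tf / γ) * t = x ^ 2 := by rw [ht]; field_simp
    have hx2 : x ^ q = (2 * Tf / γ) ^ (q / 2) * t ^ (q / 2) := by
      calc x ^ q = (x ^ (2:ℕ) : ℝ) ^ (q / 2) := by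
            rw [← Real.rpow_natCast x 2, ← Real.rpow_mul hx0]
            congr 1
            push_cast
            ring
      _ = ((2 * Tf / γ) * t) ^ (q / 2) := by rw [hbase]
      _ = (2 * Tf / γ) ^ (q / 2) * t ^ (q / 2) :=
            Real.mul_rpow (by positivity) ht0
    calc x ^ q * Real.exp (-t)
        = (2 * Tf / γ) ^ (q / 2) * (t ^ (q / 2) * Real.exp (-t)) := by
          rw [hx2]; ring
    _ ≤ (2 * Tf / γ) ^ (q / 2) * (2 * (q / 2)) ^ (q / 2) := by
          apply mul_le_mul_of_nonneg_left (texp_aux (q/2) t (by linarith) ht0) (by positivity)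
    _ = (2 * q / γ) ^ (q / 2) * Tf ^ (q / 2) := by
          rw [← Real.mul_rpow (by positivity) (by positivity),
            ← Real.mul_rpow (by positivity) hT0.le]
          congr 1
          field_simp
  have hsplit : (2 * π * Tf) ^ (-(3:ℝ) / 2)
      = (2 * π) ^ (-(3:ℝ) / 2) * Tf ^ (-(3:ℝ) / 2) :=
    Real.mul_rpow (by positivity) hT0.le
  have hTT : Tf ^ (-(3:ℝ) / 2) * Tf ^ (q / 2) = Tf ^ ((q - 3) / 2) := by
    rw [← Real.rpow_add hT0]
    congr 1; ring
  calc x ^ q * (ρf * (2 * π * Tf) ^ (-(3:ℝ) / 2) * Real.exp (-γ * x ^ 2 / (2 * Tf)))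
      = ((2 * π) ^ (-(3:ℝ)/2) * ρf * Tf ^ (-(3:ℝ)/2)) * (x ^ q * Real.exp (-t)) := by
        rw [hsplit, harg]; ring
  _ ≤ ((2 * π) ^ (-(3:ℝ)/2) * ρf * Tf ^ (-(3:ℝ)/2)) * ((2 * q / γ) ^ (q / 2) * Tf ^ (q / 2)) := by
        apply mul_le_mul_of_nonneg_left hxq (by positivity)
  _ = (2 * π) ^ (-(3:ℝ)/2) * (2 * q / γ) ^ (q / 2) * (ρf * (Tf ^ (-(3:ℝ)/2) * Tf ^ (q / 2))) := by
        ring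
  _ = (2 * π) ^ (-(3:ℝ)/2) * (2 * q / γ) ^ (q / 2) * (ρf * Tf ^ ((q - 3) / 2)) := by
        rw [hTT]
  _ ≤ (2 * π) ^ (-(3:ℝ)/2) * (2 * q / γ) ^ (q / 2) * (D * N) := by
        apply mul_le_mul_of_nonneg_left hkey (by positivity)
  _ = (2 * π) ^ (-(3:ℝ)/2) * (2 * q / γ) ^ (q / 2) * D * N := by ring
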